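/- Let q > 2 be a prime power, K a field containing F_q, Ω an algebraically closed field containing K, α, δ ∈ K with α ≠ 0, and ρ₁, ρ₂ ∈ Ω. Set F = α(A − ρ₁)(A − ρ₂) ∈ Ω[A] and G = A^q + αA + δ ∈ Ω[A]. Suppose p₀, p₁ ∈ Ω[A] are coprime polynomials with max(deg p₀, deg p₁) = q and p₁ monic, satisfying (p₀ + p₁)^{q+1} · F^q = p₁ p₀^q G^{q+1} in Ω[A]. Then ρ₁^q + αρ₂ + δ = 0 or ρ₂^q + αρ₁ + δ = 0. -/

import Mathlib

open Polynomial

private lemma coprime_no_common_root {Ω : Type} [Field Ω] {p₀ p₁ : Polynomial Ω}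
    (h : IsCoprime p₀ p₁) {x : Ω} (h0 : p₀.eval x = 0) (h1 : p₁.eval x = 0) : False := by
  obtain ⟨u, v, huv⟩ := h
  have := congrArg (Polynomial.eval x) huv
  simp [h0, h1] at this

private lemma X_sub_C_coprime {Ω : Type} [Field Ω] {a b : Ω} (h : a ≠ b) :
    IsCoprime (X - C a : Polynomial Ω) (X - C b) := by
  refine ⟨-C (a - b)⁻¹, C (a - b)⁻¹, ?_⟩
  rw [neg_mul, ← sub_eq_neg_add, ← mul_sub, sub_sub_sub_cancel_left, ← C_sub, ← C_mul,
    inv_mul_cancel₀ (sub_ne_zero_of_ne h), C_1]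

private lemma monic_all_roots {Ω : Type} [Field Ω] [IsAlgClosed Ω] {p₁ : Polynomial Ω}
    {q : ℕ} {ρ : Ω} (hm : p₁.Monic) (hd : p₁.natDegree = q)
    (hr : ∀ γ, p₁.eval γ = 0 → γ = ρ) : p₁ = (X - C ρ) ^ q := by
  have hs : Splits p₁ := IsAlgClosed.splits p₁
  have hprod := hs.eq_prod_roots_of_monic hm
  have hcard : Multiset.card p₁.roots = q := by rw [splits_iff_card_roots.mp hs, hd]
  have hrep : p₁.roots = Multiset.replicate q ρ := by
    rw [Multiset.eq_replicate]
    exact ⟨hcard, fun b hb => hr b (isRoot_of_mem_roots hb)⟩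
  rw [hprod, hrep, Multiset.map_replicate, Multiset.prod_replicate]

private lemma deg_one_factor {Ω : Type} [Field Ω] {p : Polynomial Ω} {β : Ω}
    (hd : p.natDegree = 1) (hr : p.eval β = 0) :
    ∃ a : Ω, a ≠ 0 ∧ p = C a * (X - C β) := by
  have hp0 : p ≠ 0 := fun h => by simp [h] at hd
  obtain ⟨h, hh⟩ := dvd_iff_isRoot.mpr hr
  have hh0 : h ≠ 0 := fun he => hp0 (by rw [hh, he, mul_zero])
  have hdh : h.natDegree = 0 := by
    have := congrArg natDegree hh
    rw [natDegree_mul (X_sub_C_ne_zero β) hh0, natDegree_X_sub_C, hd] at this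
    omega
  refine ⟨h.coeff 0, fun he => hh0 ?_, ?_⟩
  · rw [eq_C_of_natDegree_eq_zero hdh, he, C_0]
  · rw [hh, mul_comm]
    congr 1
    exact eq_C_of_natDegree_eq_zero hdh

private lemma final_coeffs {Ω : Type} [Field Ω] {p n q : ℕ} [hfp : Fact p.Prime] [CharP Ω p]
    (hq : q = p ^ n) (hq2 : 2 < q) {a c α δ ρ ρ' : Ω}
    (h : C a * (X - C ρ) + (X - C ρ') ^ q = C c * (X ^ q + C α * X + C δ)) :
    ρ' ^ q + α * ρ + δ = 0 := by
  have hfr : ((X : Polynomial Ω) - C ρ') ^ q = X ^ q - C (ρ' ^ q) := by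
    rw [hq, sub_pow_char_pow, ← C_pow]
  rw [hfr] at h
  have hq0 : q ≠ 0 := by omega
  have hq1 : q ≠ 1 := by omega
  have e0 := congrArg (fun f : Polynomial Ω => coeff f 0) h
  have e1 := congrArg (fun f : Polynomial Ω => coeff f 1) h
  have eq' := congrArg (fun f : Polynomial Ω => coeff f q) h
  simp only [coeff_add, coeff_sub, coeff_C_mul, coeff_C, coeff_X_pow, coeff_X] at e0 e1 eq'
  simp [hq0, hq1, Ne.symm hq0, Ne.symm hq1] at e0 e1 eq'
  linear_combination -e0 - ρ * e1 + (δ + α * ρ) * eq'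

theorem stmt_14 (q : ℕ) (hq : IsPrimePow q) (hq2 : 2 < q)
    (Ω : Type) [Field Ω] [IsAlgClosed Ω]
    (Fq K : Subfield Ω) (hsub : Fq ≤ K) (hFq : Nat.card Fq = q)
    (α δ : Ω) (hαK : α ∈ K) (hδK : δ ∈ K) (hα : α ≠ 0)
    (ρ₁ ρ₂ : Ω)
    (p₀ p₁ : Polynomial Ω) (hcop : IsCoprime p₀ p₁)
    (hdeg : max p₀.degree p₁.degree = (q : ℕ)) (hmonic : p₁.Monic)
    (hid : (p₀ + p₁) ^ (q + 1) * (C α * (X - C ρ₁) * (X - C ρ₂)) ^ q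
        = p₁ * p₀ ^ q * (X ^ q + C α * X + C δ) ^ (q + 1)) :
    ρ₁ ^ q + α * ρ₂ + δ = 0 ∨ ρ₂ ^ q + α * ρ₁ + δ = 0 := by
  -- characteristic setup
  obtain ⟨p, n, hp', hn, hpn⟩ := hq
  have hp : p.Prime := hp'.nat_prime
  haveI : Fact p.Prime := ⟨hp⟩
  haveI : Finite Fq := Nat.finite_of_card_ne_zero (by rw [hFq]; omega)
  haveI : Fintype Fq := Fintype.ofFinite Fq
  haveI hchar : CharP Ω p := by
    have hcFq : CharP Fq (ringChar Fq) := ringChar.charP Fq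
    obtain ⟨m, hrp, hcard⟩ := FiniteField.card Fq (ringChar Fq)
    have hqr : q = ringChar Fq ^ (m : ℕ) := by
      rw [← hFq, Nat.card_eq_fintype_card, hcard]
    have hpr : p = ringChar Fq := by
      have hdvd : p ∣ ringChar Fq ^ (m : ℕ) := by
        rw [← hqr, ← hpn]
        exact dvd_pow_self p hn.ne'
      exact (Nat.prime_dvd_prime_iff_eq hp hrp).mp (hp.dvd_of_dvd_pow hdvd)
    rw [hpr]
    exact charP_of_injective_ringHom (f := Fq.subtype) Subtype.coe_injective (ringChar Fq)
  have hq0 : 0 < q := by omega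
  have hqΩ : (q : Ω) = 0 := by
    rw [← hpn]
    push_cast
    rw [CharP.cast_eq_zero Ω p]
    exact zero_pow hn.ne'
  set G : Polynomial Ω := X ^ q + C α * X + C δ with hGdef
  set F : Polynomial Ω := C α * (X - C ρ₁) * (X - C ρ₂) with hFdef
  have hGm : G.Monic := by
    rw [hGdef]
    monicity!
    all_goals try omega
    all_goals (rw [if_pos (show (1:ℕ) ≤ q by omega), if_neg (show ¬ q ≤ 1 by omega)]; simp)
  have hG0 : G ≠ 0 := hGm.ne_zero
  have hGd : G.natDegree = q := by
    rw [hGdef]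
    compute_degree!
    all_goals try omega
    all_goals (rw [if_neg (show ¬ q = 1 by omega), if_neg (show ¬ q = 0 by omega)]; simp)
  have hGsep : G.Separable := by
    rw [separable_def]
    have hder : derivative G = C α := by
      rw [hGdef]
      simp [derivative_X_pow, hqΩ]
    rw [hder]
    exact ⟨0, C α⁻¹, by simp [← C_mul, inv_mul_cancel₀ hα]⟩
  have hCα : (C α : Polynomial Ω) ≠ 0 := by simpa using hα
  have hFne : F ≠ 0 := by
    rw [hFdef]
    exact mul_ne_zero (mul_ne_zero hCα (X_sub_C_ne_zero ρ₁)) (X_sub_C_ne_zero ρ₂)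
  -- contradiction setup
  by_contra hcon
  push_neg at hcon
  obtain ⟨hcon1, hcon2⟩ := hcon
  -- p₀ + p₁ ≠ 0
  have hsum0 : p₀ + p₁ ≠ 0 := by
    intro h
    have h2 : p₁ * p₀ ^ q * G ^ (q + 1) = 0 := by
      rw [← hid, h, zero_pow (by omega : q + 1 ≠ 0), zero_mul]
    rcases mul_eq_zero.mp h2 with h3 | h3
    · rcases mul_eq_zero.mp h3 with h4 | h4
      · exact hmonic.ne_zero h4
      · have h5 : p₀ = 0 := pow_eq_zero_iff (by omega : q ≠ 0) |>.mp h4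
        rw [h5, zero_add] at h
        exact hmonic.ne_zero h
    · exact pow_ne_zero _ hG0 h3
  -- every root of G is a root of p₀ + p₁
  have hroots_sum : ∀ β : Ω, G.eval β = 0 → (p₀ + p₁).eval β = 0 := by
    intro β hβ
    by_contra hnβ
    have hco : IsCoprime (X - C β : Polynomial Ω) (p₀ + p₁) :=
      ((irreducible_X_sub_C β).coprime_iff_not_dvd).mpr (fun hd => hnβ (dvd_iff_isRoot.mp hd))
    have hdvd1 : (X - C β : Polynomial Ω) ^ (q + 1) ∣ (p₀ + p₁) ^ (q + 1) * F ^ q := by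
      rw [hid]
      exact Dvd.dvd.mul_left (pow_dvd_pow_of_dvd (dvd_iff_isRoot.mpr hβ) _) _
    have hdvd2 : (X - C β : Polynomial Ω) ^ (q + 1) ∣ F ^ q :=
      (hco.pow).dvd_of_dvd_mul_left hdvd1
    have hCαq : (C (α ^ q) : Polynomial Ω) ≠ 0 := by
      simpa using pow_ne_zero q hα
    have hstrip : ∀ x y : Ω, (X - C β : Polynomial Ω) ^ (q + 1) ∣
        C (α ^ q) * (X - C x) ^ q * (X - C y) ^ q → β = x := by
      intro x y hdvd
      by_contra hne
      have hcx : IsCoprime ((X - C β : Polynomial Ω) ^ (q + 1)) ((X - C x) ^ q) :=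
        (X_sub_C_coprime hne).pow
      rw [show C (α ^ q) * (X - C x) ^ q * (X - C y) ^ q
          = C (α ^ q) * (X - C y) ^ q * (X - C x) ^ q from by ring] at hdvd
      have hd2 : (X - C β : Polynomial Ω) ^ (q + 1) ∣ C (α ^ q) * (X - C y) ^ q :=
        hcx.dvd_of_dvd_mul_right hdvd
      by_cases hne2 : β = y
      · subst hne2
        have hg0 : (C (α ^ q) * (X - C β) ^ q : Polynomial Ω) ≠ 0 :=
          mul_ne_zero hCαq (pow_ne_zero _ (X_sub_C_ne_zero β))
        have hle := natDegree_le_of_dvd hd2 hg0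
        rw [natDegree_pow, natDegree_X_sub_C, mul_one,
          natDegree_mul hCαq (pow_ne_zero _ (X_sub_C_ne_zero β)), natDegree_C,
          natDegree_pow, natDegree_X_sub_C, mul_one, zero_add] at hle
        omega
      · have hcy : IsCoprime ((X - C β : Polynomial Ω) ^ (q + 1)) ((X - C y) ^ q) :=
          (X_sub_C_coprime hne2).pow
        have hd3 : (X - C β : Polynomial Ω) ^ (q + 1) ∣ C (α ^ q) :=
          hcy.dvd_of_dvd_mul_right hd2
        have hle := natDegree_le_of_dvd hd3 hCαq
        rw [natDegree_pow, natDegree_X_sub_C, mul_one, natDegree_C] at hle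
        omega
    have hFq' : F ^ q = C (α ^ q) * (X - C ρ₁) ^ q * (X - C ρ₂) ^ q := by
      rw [hFdef, mul_pow, mul_pow, ← C_pow]
    rw [hFq'] at hdvd2
    have hβ1 : β = ρ₁ := hstrip ρ₁ ρ₂ hdvd2
    have hβ2 : β = ρ₂ := hstrip ρ₂ ρ₁ (by
      rwa [show C (α ^ q) * (X - C ρ₂) ^ q * (X - C ρ₁) ^ q
        = C (α ^ q) * (X - C ρ₁) ^ q * (X - C ρ₂) ^ q from by ring])
    apply hcon1
    have hβG : β ^ q + α * β + δ = 0 := by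
      have hb := hβ
      rw [hGdef] at hb
      simpa using hb
    rw [← hβ1, ← hβ2]
    exact hβG
  -- G divides p₀ + p₁
  have hGdvd : G ∣ p₀ + p₁ := by
    have hnodup : G.roots.Nodup := nodup_roots hGsep
    have hprod := (IsAlgClosed.splits G).eq_prod_roots_of_monic hGm
    have hfs : G = ∏ β ∈ (⟨G.roots, hnodup⟩ : Finset Ω), (X - C β) := by
      rw [Finset.prod_eq_multiset_prod]
      exact hprod
    rw [hfs]
    refine Finset.prod_dvd_of_coprime ?_ ?_
    · intro x hx y hy hxy
      exact X_sub_C_coprime hxy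
    · intro β hβ
      rw [dvd_iff_isRoot]
      exact hroots_sum β (isRoot_of_mem_roots hβ)
  obtain ⟨h, hh⟩ := hGdvd
  have hh0 : h ≠ 0 := fun he => hsum0 (by rw [hh, he, mul_zero])
  have hsumdeg : (p₀ + p₁).natDegree ≤ q := by
    have hdle : (p₀ + p₁).degree ≤ ((q : ℕ) : WithBot ℕ) :=
      le_trans (degree_add_le _ _) (le_of_eq hdeg)
    exact natDegree_le_iff_degree_le.mpr hdle
  have hdh : h.natDegree = 0 := by
    have hnd := congrArg natDegree hh
    rw [natDegree_mul hG0 hh0, hGd] at hnd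
    omega
  have hCc : h = C (h.coeff 0) := eq_C_of_natDegree_eq_zero hdh
  set c : Ω := h.coeff 0 with hcdef
  have hc0 : c ≠ 0 := fun he => hh0 (by rw [hCc, he, C_0])
  have hCcne : (C c : Polynomial Ω) ≠ 0 := by simpa using hc0
  have hsum : p₀ + p₁ = C c * G := by rw [hh, hCc, mul_comm]
  have hkey : C c ^ (q + 1) * F ^ q = p₁ * p₀ ^ q := by
    apply mul_left_cancel₀ (pow_ne_zero (q + 1) hG0)
    calc G ^ (q + 1) * (C c ^ (q + 1) * F ^ q)
        = C c ^ (q + 1) * G ^ (q + 1) * F ^ q := by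
          rw [← mul_assoc, mul_comm (G ^ (q + 1))]
      _ = (C c * G) ^ (q + 1) * F ^ q := by rw [mul_pow (C c) G (q + 1)]
      _ = (p₀ + p₁) ^ (q + 1) * F ^ q := by rw [← hsum]
      _ = p₁ * p₀ ^ q * G ^ (q + 1) := hid
      _ = G ^ (q + 1) * (p₁ * p₀ ^ q) := by rw [mul_comm]
  have hp₀ne : p₀ ≠ 0 := by
    intro he
    rw [he, zero_pow (by omega : q ≠ 0), mul_zero] at hkey
    exact (mul_ne_zero (pow_ne_zero _ hCcne) (pow_ne_zero _ hFne)) hkey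
  have hp₁ne : p₁ ≠ 0 := hmonic.ne_zero
  have hFd : F.natDegree = 2 := by
    rw [hFdef, natDegree_mul (mul_ne_zero hCα (X_sub_C_ne_zero ρ₁)) (X_sub_C_ne_zero ρ₂),
      natDegree_mul hCα (X_sub_C_ne_zero ρ₁), natDegree_C, natDegree_X_sub_C, natDegree_X_sub_C]
  have hdeq : q * 2 = p₁.natDegree + q * p₀.natDegree := by
    have hnd := congrArg natDegree hkey
    rw [natDegree_mul (pow_ne_zero _ hCcne) (pow_ne_zero _ hFne),
      natDegree_mul hp₁ne (pow_ne_zero _ hp₀ne),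
      natDegree_pow, natDegree_pow, natDegree_pow, natDegree_C, hFd, mul_zero, zero_add] at hnd
    omega
  have hle0 : p₀.degree ≤ ((q : ℕ) : WithBot ℕ) := hdeg ▸ le_max_left _ _
  have hle1 : p₁.degree ≤ ((q : ℕ) : WithBot ℕ) := hdeg ▸ le_max_right _ _
  have hnd0 : p₀.natDegree ≤ q := natDegree_le_iff_degree_le.mpr hle0
  have hnd1 : p₁.natDegree ≤ q := natDegree_le_iff_degree_le.mpr hle1
  have hmaxq : p₀.natDegree = q ∨ p₁.natDegree = q := by
    rcases max_cases p₀.degree p₁.degree with ⟨hm, _⟩ | ⟨hm, _⟩ <;> rw [hm] at hdeg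
    · exact Or.inl (natDegree_eq_of_degree_eq_some hdeg)
    · exact Or.inr (natDegree_eq_of_degree_eq_some hdeg)
  have hd0le : p₀.natDegree ≤ 2 := by
    by_contra hgt
    push_neg at hgt
    have h1 : q * 3 ≤ q * p₀.natDegree := Nat.mul_le_mul_left q (by omega : 3 ≤ p₀.natDegree)
    have h2 : q * p₀.natDegree ≤ q * 2 := hdeq ▸ Nat.le_add_left _ _
    have h3 := le_trans h1 h2
    omega
  have hd0 : p₀.natDegree = 1 := by
    have h012 : p₀.natDegree = 0 ∨ p₀.natDegree = 1 ∨ p₀.natDegree = 2 := by omega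
    rcases h012 with hv | hv | hv
    · rw [hv, mul_zero] at hdeq
      omega
    · exact hv
    · rw [hv] at hdeq
      rcases hmaxq with hm | hm <;> omega
  have hd1 : p₁.natDegree = q := by
    rw [hd0, mul_one] at hdeq
    omega
  obtain ⟨β, hβ⟩ := IsAlgClosed.exists_root p₀
    (by rw [degree_eq_natDegree hp₀ne, hd0]; exact one_ne_zero)
  have hβ0 : p₀.eval β = 0 := hβ
  have hRHSroot : ∀ γ : Ω, p₁.eval γ * (p₀.eval γ) ^ q = 0 → γ = ρ₁ ∨ γ = ρ₂ := by
    intro γ h0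
    have hev := congrArg (eval γ) hkey
    rw [hFdef] at hev
    simp only [eval_mul, eval_pow, eval_sub, eval_C, eval_X] at hev
    rw [h0] at hev
    rcases mul_eq_zero.mp hev with h1 | h1
    · exact absurd (pow_eq_zero_iff (by omega : q + 1 ≠ 0) |>.mp h1) hc0
    · have h2 := pow_eq_zero_iff (by omega : q ≠ 0) |>.mp h1
      rcases mul_eq_zero.mp h2 with h3 | h3
      · rcases mul_eq_zero.mp h3 with h4 | h4
        · exact absurd h4 hα
        · exact Or.inl (sub_eq_zero.mp h4)
      · exact Or.inr (sub_eq_zero.mp h3)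
  have hβmem : β = ρ₁ ∨ β = ρ₂ := hRHSroot β (by
    rw [hβ0, zero_pow (by omega : q ≠ 0), mul_zero])
  have hp1root : ∀ γ, p₁.eval γ = 0 → γ = ρ₁ ∨ γ = ρ₂ := fun γ hγ =>
    hRHSroot γ (by rw [hγ, zero_mul])
  have hρne : ρ₁ ≠ ρ₂ := by
    intro he
    obtain ⟨γ, hγ⟩ := IsAlgClosed.exists_root p₁
      (by rw [degree_eq_natDegree hp₁ne, hd1]; exact_mod_cast hq0.ne')
    have hγ0 : p₁.eval γ = 0 := hγ
    have hγ1 : γ = ρ₁ := by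
      rcases hp1root γ hγ0 with hv | hv
      · exact hv
      · rw [hv, ← he]
    have hβ1 : β = ρ₁ := by
      rcases hβmem with hv | hv
      · exact hv
      · rw [hv, ← he]
    exact coprime_no_common_root hcop (x := ρ₁) (by rw [← hβ1]; exact hβ0) (by rw [← hγ1]; exact hγ0)
  rcases hβmem with hβρ | hβρ
  · -- β = ρ₁, conclude ρ₂^q + α ρ₁ + δ = 0, contradicting hcon2
    have hp₁ρ₁ : p₁.eval ρ₁ ≠ 0 := fun h0 =>
      coprime_no_common_root hcop (by rw [← hβρ]; exact hβ0) h0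
    have hall : ∀ γ, p₁.eval γ = 0 → γ = ρ₂ := by
      intro γ hγ
      rcases hp1root γ hγ with hv | hv
      · exact absurd (hv ▸ hγ) hp₁ρ₁
      · exact hv
    have hp₁eq : p₁ = (X - C ρ₂) ^ q := monic_all_roots hmonic hd1 hall
    obtain ⟨a, ha0, hp₀eq⟩ := deg_one_factor (β := ρ₁) hd0 (by rw [← hβρ]; exact hβ0)
    have hfin : C a * (X - C ρ₁) + (X - C ρ₂) ^ q = C c * (X ^ q + C α * X + C δ) := by
      rw [← hp₀eq, ← hp₁eq, hsum, hGdef]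
    exact hcon2 (final_coeffs hpn.symm hq2 hfin)
  · -- β = ρ₂, conclude ρ₁^q + α ρ₂ + δ = 0, contradicting hcon1
    have hp₁ρ₂ : p₁.eval ρ₂ ≠ 0 := fun h0 =>
      coprime_no_common_root hcop (by rw [← hβρ]; exact hβ0) h0
    have hall : ∀ γ, p₁.eval γ = 0 → γ = ρ₁ := by
      intro γ hγ
      rcases hp1root γ hγ with hv | hv
      · exact hv
      · exact absurd (hv ▸ hγ) hp₁ρ₂
    have hp₁eq : p₁ = (X - C ρ₁) ^ q := monic_all_roots hmonic hd1 hall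
    obtain ⟨a, ha0, hp₀eq⟩ := deg_one_factor (β := ρ₂) hd0 (by rw [← hβρ]; exact hβ0)
    have hfin : C a * (X - C ρ₂) + (X - C ρ₁) ^ q = C c * (X ^ q + C α * X + C δ) := by
      rw [← hp₀eq, ← hp₁eq, hsum, hGdef]
    exact hcon1 (final_coeffs hpn.symm hq2 hfin)
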